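/- The modified union-find algorithm that processes the edges of a finite connected graph in the order given by a G-ordering, and for each edge e = uv sets the parent of root(u) to root(v) if root(v) ≺ root(u) (and symmetrically), produces a rooted tree satisfying the Basin Hierarchy Tree conditions. -/

import Mathlib

open scoped Classical

/-- A (multi)graph given by source and target maps on an edge type. -/
structure MGraph (V E : Type*) where
  src : E → V
  tgt : E → V

namespace MGraph

variable {V E : Type*} (G : MGraph V E)

/-- `e` is an edge joining `x` and `y`. -/
def Ends (e : E) (x y : V) : Prop :=
  (G.src e = x ∧ G.tgt e = y) ∨ (G.src e = y ∧ G.tgt e = x)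

/-- The graph is connected. -/
def Connected : Prop :=
  ∀ a b : V, Relation.ReflTransGen (fun x y => ∃ e, G.Ends e x y) a b

/-- Extension of a vertex signal to vertices and edges, `f(e) = max f(V(e))`. -/
def sig (f : V → ℝ) : V ⊕ E → ℝ
  | .inl v => f v
  | .inr e => max (f (G.src e)) (f (G.tgt e))

/-- `pos` realizes a `G`-ordering: a total ordering of `V ⊕ E` along which the
signal is nondecreasing and every vertex precedes each edge incident to it. -/
def IsGOrdering (f : V → ℝ) (pos : V ⊕ E → ℕ) : Prop :=
  Function.Injective pos ∧
  (∀ a b, pos a ≤ pos b → G.sig f a ≤ G.sig f b) ∧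
  (∀ e : E, pos (.inl (G.src e)) < pos (.inr e) ∧ pos (.inl (G.tgt e)) < pos (.inr e))

/-- Connectivity within the subgraph `G_{<k}` of elements with position `< k`. -/
def ConnB (pos : V ⊕ E → ℕ) (k : ℕ) (a b : V) : Prop :=
  pos (.inl a) < k ∧ pos (.inl b) < k ∧
    Relation.ReflTransGen (fun x y => ∃ e, pos (.inr e) < k ∧ G.Ends e x y) a b

/-- `m` is the `≺`-minimum of the connected component of `v` in `G_{<k}`. -/
def IsCompMin (pos : V ⊕ E → ℕ) (k : ℕ) (m v : V) : Prop :=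
  G.ConnB pos k m v ∧ ∀ w, G.ConnB pos k v w → pos (.inl m) ≤ pos (.inl w)

/-- The `≺`-maximal endpoint of an edge. -/
def maxEnd (pos : V ⊕ E → ℕ) (e : E) : V :=
  if pos (.inl (G.src e)) ≤ pos (.inl (G.tgt e)) then G.tgt e else G.src e

/-- `(p, L)` is a basin hierarchy tree of the signal `(G, f)` with respect to the
`G`-ordering `pos`, rooted at the `≺`-minimal vertex `r`, with linking-vertex map `L`. -/
structure IsBHT (f : V → ℝ) (pos : V ⊕ E → ℕ) (r : V) (p : V → V) (L : V → V) : Prop where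
  ordering : G.IsGOrdering f pos
  root_min : ∀ v, pos (.inl r) ≤ pos (.inl v)
  root_fix : p r = r
  reaches : ∀ v, ∃ n, p^[n] v = r
  spec : ∀ v, v ≠ r → ∃ e : E,
    G.IsCompMin pos (pos (.inr e)) v v ∧
    G.IsCompMin pos (pos (.inr e) + 1) (p v) v ∧
    L v = G.maxEnd pos e

end MGraph

/-- `u` is an ancestor of `v` in the tree with parent map `p` (`u ⪯_T v`). -/
def Anc {V : Type*} (p : V → V) (u v : V) : Prop := ∃ n, p^[n] v = u

/-- `f(𝔏(v))`, with value `+∞` at the root. -/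
noncomputable def fLink {V : Type*} (f : V → ℝ) (r : V) (L : V → V) (v : V) : EReal :=
  if v = r then ⊤ else (f (L v) : EReal)

/-- The persistence `pers(v) = f(𝔏(v)) - f(v)` of a vertex in a BHT. -/
noncomputable def persBHT {V : Type*} (f : V → ℝ) (r : V) (L : V → V) (v : V) : EReal :=
  fLink f r L v - (f v : EReal)

namespace MGraph

variable {V E : Type*} (G : MGraph V E)

/-- The component of `v` dies at the edge `e`: `v` is the minimum of its component
just before `e` is added, and no longer after. -/
def DiesAt (pos : V ⊕ E → ℕ) (v : V) (e : E) : Prop :=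
  G.IsCompMin pos (pos (.inr e)) v v ∧ ¬ G.IsCompMin pos (pos (.inr e) + 1) v v

/-- The death value of the component created by `v` (`+∞` if permanent). -/
noncomputable def deathVal (f : V → ℝ) (pos : V ⊕ E → ℕ) (v : V) : EReal :=
  if h : ∃ e, G.DiesAt pos v e then ((G.sig f (.inr h.choose) : ℝ) : EReal) else ⊤

/-- The degree-0 persistence diagram of `(G, f)`, as a multiset of intervals
`[birth, death)` (including trivial intervals). -/
noncomputable def PD0 [Fintype V] (f : V → ℝ) (pos : V ⊕ E → ℕ) : Multiset (EReal × EReal) :=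
  Finset.univ.val.map fun v : V => ((f v : EReal), G.deathVal f pos v)

end MGraph

/-- The nontrivial part of a multiset of intervals. -/
noncomputable def nontriv (M : Multiset (EReal × EReal)) : Multiset (EReal × EReal) :=
  M.filter fun ab => ab.1 < ab.2

/-- The 0-low-persistence filter associated to a BHT `(p, L)` rooted at `r`. -/
noncomputable def LPF {V : Type*} [Fintype V] (f : V → ℝ) (r : V) (p L : V → V)
    (ε : ℝ) (v : V) : ℝ :=
  (insert (f v) ((Finset.univ.filter fun u => Anc p u v ∧ persBHT f r L u < (ε : EReal)).image
    fun u => f (L u))).max' (Finset.insert_nonempty _ _)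

/-- The root of the union-find forest containing `v` (the parent map is iterated
enough times to reach a fixed point). -/
def ufRoot {V : Type*} [Fintype V] (p : V → V) (v : V) : V := p^[Fintype.card V] v

namespace MGraph

variable {V E : Type*} [Fintype V] (G : MGraph V E)

/-- One step of the modified union-find algorithm: for an edge `e = uv`, the
parent of `root(u)` is set to `root(v)` if `root(v) ≺ root(u)`, and symmetrically. -/
noncomputable def ufStep (pos : V ⊕ E → ℕ) (p : V → V) (e : E) : V → V :=
  let ru := ufRoot p (G.src e)
  let rv := ufRoot p (G.tgt e)
  if pos (.inl rv) < pos (.inl ru) then Function.update p ru rv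
  else if pos (.inl ru) < pos (.inl rv) then Function.update p rv ru
  else p

/-- Running the modified union-find algorithm on a list of edges, starting from
the trivial forest in which every vertex is its own parent. -/
noncomputable def ufRun (pos : V ⊕ E → ℕ) (l : List E) : V → V :=
  l.foldl (G.ufStep pos) id

end MGraph


section UFProofAux

namespace UFProof

set_option linter.unusedSectionVars false

open Function

variable {V E : Type*} (G : MGraph V E) (pos : V ⊕ E → ℕ)

/-- Connectivity via a set of edges. -/
def Conn (S : E → Prop) : V → V → Prop :=
  Relation.ReflTransGen (fun x y => ∃ e, S e ∧ G.Ends e x y)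

lemma Ends.symm {e : E} {x y : V} (h : G.Ends e x y) : G.Ends e y x := h.elim .inr .inl

lemma conn_symm {S : E → Prop} {a b : V} (h : Conn G S a b) : Conn G S b a := by
  refine @Std.Symm.symm _ _ (@Relation.ReflTransGen.symmetric _ _ ⟨?_⟩) _ _ h
  rintro x y ⟨e, he, hxy⟩
  exact ⟨e, he, Ends.symm G hxy⟩

lemma conn_mono {S S' : E → Prop} (hS : ∀ e, S e → S' e) {a b : V}
    (h : Conn G S a b) : Conn G S' a b :=
  Relation.ReflTransGen.mono (fun _ _ ⟨e, he, hxy⟩ => ⟨e, hS e he, hxy⟩) _ _ h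

/-- Parent maps strictly decreasing with respect to the ordering. -/
def DecP (p : V → V) : Prop := ∀ v, p v = v ∨ pos (.inl (p v)) < pos (.inl v)

/-- Invariant of the union-find forest. -/
structure Inv (S : E → Prop) (p : V → V) : Prop where
  dec : DecP pos p
  conn : ∀ v, Conn G S v (p v)
  root_min : ∀ v w, p v = v → Conn G S v w → pos (.inl v) ≤ pos (.inl w)

lemma Inv.of_iff {S S' : E → Prop} (h : ∀ e, S e ↔ S' e) {p : V → V}
    (hI : Inv G pos S p) : Inv G pos S' p where
  dec := hI.dec
  conn v := conn_mono G (fun e => (h e).1) (hI.conn v)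
  root_min v w hv hc := hI.root_min v w hv (conn_mono G (fun e => (h e).2) hc)

lemma iterate_conn {S : E → Prop} {p : V → V} (hc : ∀ v, Conn G S v (p v)) :
    ∀ (n : ℕ) (v : V), Conn G S v (p^[n] v) := by
  intro n
  induction n with
  | zero => intro v; exact .refl
  | succ k ih =>
    intro v
    rw [Function.iterate_succ_apply']
    exact (ih v).trans (hc _)

lemma conn_split {S : E → Prop} {e : E} {x y : V} (hxy : G.Ends e x y) {a b : V}
    (h : Conn G (fun e' => S e' ∨ e' = e) a b) :
    Conn G S a b ∨ ((Conn G S a x ∨ Conn G S a y) ∧ (Conn G S x b ∨ Conn G S y b)) := by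
  induction h with
  | refl => exact Or.inl .refl
  | @tail c b' hcb hstep ih =>
    obtain ⟨e', he', hends⟩ := hstep
    rcases he' with he' | rfl
    · rcases ih with h1 | ⟨h1, h2⟩
      · exact Or.inl (h1.tail ⟨e', he', hends⟩)
      · refine Or.inr ⟨h1, ?_⟩
        rcases h2 with h2 | h2
        · exact Or.inl (h2.tail ⟨e', he', hends⟩)
        · exact Or.inr (h2.tail ⟨e', he', hends⟩)
    · have hmc : c = x ∨ c = y := by
        rcases hends with ⟨h1, h2⟩ | ⟨h1, h2⟩ <;> rcases hxy with ⟨h3, h4⟩ | ⟨h3, h4⟩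
        · exact Or.inl (h1.symm.trans h3)
        · exact Or.inr (h1.symm.trans h3)
        · exact Or.inr (h2.symm.trans h4)
        · exact Or.inl (h2.symm.trans h4)
      have hmb : b' = x ∨ b' = y := by
        rcases hends with ⟨h1, h2⟩ | ⟨h1, h2⟩ <;> rcases hxy with ⟨h3, h4⟩ | ⟨h3, h4⟩
        · exact Or.inr (h2.symm.trans h4)
        · exact Or.inl (h2.symm.trans h4)
        · exact Or.inl (h1.symm.trans h3)
        · exact Or.inr (h1.symm.trans h3)
      refine Or.inr ⟨?_, ?_⟩
      · rcases ih with h1 | ⟨h1, _⟩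
        · rcases hmc with rfl | rfl
          · exact Or.inl h1
          · exact Or.inr h1
        · exact h1
      · rcases hmb with rfl | rfl
        · exact Or.inl .refl
        · exact Or.inr .refl

lemma conn_endpoint_lt {Q : E → Prop} {K : ℕ}
    (hord : ∀ e : E, pos (.inl (G.src e)) < pos (.inr e) ∧ pos (.inl (G.tgt e)) < pos (.inr e))
    (hK : ∀ e', Q e' → pos (.inr e') < K) {a b : V}
    (ha : pos (.inl a) < K) (h : Conn G Q a b) : pos (.inl b) < K := by
  induction h with
  | refl => exact ha
  | @tail c b' hcb hstep ih =>
    obtain ⟨e', hQ, hends⟩ := hstep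
    rcases hends with ⟨h1, h2⟩ | ⟨h1, h2⟩
    · exact (h2 ▸ (hord e').2).trans (hK e' hQ)
    · exact (h1 ▸ (hord e').1).trans (hK e' hQ)

lemma connB_conn {K : ℕ} {Q : E → Prop} (hQ : ∀ e', pos (.inr e') < K ↔ Q e') {a b : V}
    (h : G.ConnB pos K a b) : Conn G Q a b :=
  Relation.ReflTransGen.mono (fun _ _ ⟨e, he, hxy⟩ => ⟨e, (hQ e).1 he, hxy⟩) _ _ h.2.2

lemma conn_connB {K : ℕ} {Q : E → Prop} (hQ : ∀ e', Q e' → pos (.inr e') < K) {a b : V}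
    (ha : pos (.inl a) < K) (hb : pos (.inl b) < K) (h : Conn G Q a b) :
    G.ConnB pos K a b :=
  ⟨ha, hb, Relation.ReflTransGen.mono (fun _ _ ⟨e, he, hxy⟩ => ⟨e, hQ e he, hxy⟩) _ _ h⟩

variable [Fintype V]

lemma ufRoot_fixed {p : V → V} (hd : DecP pos p) (v : V) :
    p (ufRoot p v) = ufRoot p v := by
  obtain ⟨n, hn, hfix⟩ : ∃ n ≤ Fintype.card V, p (p^[n] v) = p^[n] v := by
    by_contra h
    push_neg at h
    have hstep : ∀ n, n ≤ Fintype.card V →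
        pos (.inl (p^[n + 1] v)) < pos (.inl (p^[n] v)) := by
      intro n hn
      rw [Function.iterate_succ_apply']
      rcases hd (p^[n] v) with h1 | h1
      · exact absurd h1 (h n hn)
      · exact h1
    have hmono : ∀ m n, m < n → n ≤ Fintype.card V →
        pos (.inl (p^[n] v)) < pos (.inl (p^[m] v)) := by
      intro m n hmn hn
      induction n with
      | zero => omega
      | succ k ih =>
        rcases Nat.lt_or_ge m k with h' | h'
        · exact (hstep k (by omega)).trans (ih h' (by omega))
        · have hmk : m = k := by omega
          subst hmk
          exact hstep m (by omega)
    have hinj : Function.Injective (fun i : Fin (Fintype.card V + 1) => p^[(i : ℕ)] v) := by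
      intro i j hij
      by_contra hne
      have hne' : (i : ℕ) ≠ (j : ℕ) := fun h' => hne (Fin.ext h')
      rcases Nat.lt_or_ge (i : ℕ) (j : ℕ) with h' | h'
      · have := hmono i j h' (Nat.lt_succ_iff.mp j.isLt)
        simp only [hij] at this
        exact lt_irrefl _ this
      · have h'' : (j : ℕ) < (i : ℕ) := by omega
        have := hmono j i h'' (Nat.lt_succ_iff.mp i.isLt)
        simp only [hij] at this
        exact lt_irrefl _ this
    have := Fintype.card_le_of_injective _ hinj
    simp at this
  have heq : ufRoot p v = p^[n] v := by
    have h1 : Fintype.card V = (Fintype.card V - n) + n := by omega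
    show p^[Fintype.card V] v = p^[n] v
    rw [h1, Function.iterate_add_apply]
    exact Function.iterate_fixed hfix _
  rw [heq]; exact hfix

lemma ufRoot_conn {S : E → Prop} {p : V → V} (hc : ∀ v, Conn G S v (p v)) (v : V) :
    Conn G S v (ufRoot p v) :=
  iterate_conn G hc _ v

lemma inv_update (hinj : Function.Injective pos) {S : E → Prop} {p : V → V}
    (hI : Inv G pos S p) {e : E} {x y : V} (hxy : G.Ends e x y)
    (hlt : pos (.inl (ufRoot p y)) < pos (.inl (ufRoot p x))) :
    Inv G pos (fun e' => S e' ∨ e' = e)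
      (Function.update p (ufRoot p x) (ufRoot p y)) := by
  have ha : p (ufRoot p x) = ufRoot p x := ufRoot_fixed pos hI.dec x
  have hb : p (ufRoot p y) = ufRoot p y := ufRoot_fixed pos hI.dec y
  have hca : Conn G S x (ufRoot p x) := ufRoot_conn G hI.conn x
  have hcb : Conn G S y (ufRoot p y) := ufRoot_conn G hI.conn y
  have hba : ufRoot p y ≠ ufRoot p x := fun h => absurd (congrArg (fun z => pos (.inl z)) h) hlt.ne
  refine ⟨?_, ?_, ?_⟩
  · intro w
    by_cases hw : w = ufRoot p x
    · subst hw; rw [Function.update_self]; exact Or.inr hlt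
    · rw [Function.update_of_ne hw]; exact hI.dec w
  · intro w
    by_cases hw : w = ufRoot p x
    · subst hw; rw [Function.update_self]
      have h1 : Conn G (fun e' => S e' ∨ e' = e) (ufRoot p x) x :=
        conn_mono G (fun _ => Or.inl) (conn_symm G hca)
      have h2 : Conn G (fun e' => S e' ∨ e' = e) y (ufRoot p y) :=
        conn_mono G (fun _ => Or.inl) hcb
      exact (h1.tail ⟨e, Or.inr rfl, hxy⟩).trans h2
    · rw [Function.update_of_ne hw]
      exact conn_mono G (fun _ => Or.inl) (hI.conn w)
  · intro w w' hw hww'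
    have hwa : w ≠ ufRoot p x := by
      intro h; subst h
      rw [Function.update_self] at hw
      exact hba hw
    rw [Function.update_of_ne hwa] at hw
    rcases conn_split G hxy hww' with h | ⟨h1, h2⟩
    · exact hI.root_min w w' hw h
    · have hwb : w = ufRoot p y := by
        rcases h1 with h1 | h1
        · have hc : Conn G S w (ufRoot p x) := h1.trans hca
          have e1 := hI.root_min w _ hw hc
          have e2 := hI.root_min _ w ha (conn_symm G hc)
          exact absurd (Sum.inl.inj (hinj (le_antisymm e1 e2))) hwa
        · have hc : Conn G S w (ufRoot p y) := h1.trans hcb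
          have e1 := hI.root_min w _ hw hc
          have e2 := hI.root_min _ w hb (conn_symm G hc)
          exact Sum.inl.inj (hinj (le_antisymm e1 e2))
      subst hwb
      rcases h2 with h2 | h2
      · exact le_of_lt (lt_of_lt_of_le hlt (hI.root_min _ w' ha ((conn_symm G hca).trans h2)))
      · exact hI.root_min _ w' hb ((conn_symm G hcb).trans h2)

lemma inv_eq (hinj : Function.Injective pos) {S : E → Prop} {p : V → V}
    (hI : Inv G pos S p) {e : E}
    (heq : ufRoot p (G.src e) = ufRoot p (G.tgt e)) :
    Inv G pos (fun e' => S e' ∨ e' = e) p := by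
  have ha : p (ufRoot p (G.src e)) = ufRoot p (G.src e) := ufRoot_fixed pos hI.dec _
  have hca : Conn G S (G.src e) (ufRoot p (G.src e)) := ufRoot_conn G hI.conn _
  have hcb : Conn G S (G.tgt e) (ufRoot p (G.src e)) := by
    rw [heq]; exact ufRoot_conn G hI.conn _
  refine ⟨hI.dec, fun v => conn_mono G (fun _ => Or.inl) (hI.conn v), ?_⟩
  intro w w' hw hww'
  have hends : G.Ends e (G.src e) (G.tgt e) := Or.inl ⟨rfl, rfl⟩
  rcases conn_split G hends hww' with h | ⟨h1, h2⟩
  · exact hI.root_min w w' hw h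
  · have hc : Conn G S w (ufRoot p (G.src e)) := by
      rcases h1 with h1 | h1
      · exact h1.trans hca
      · exact h1.trans hcb
    have e1 := hI.root_min w _ hw hc
    have e2 := hI.root_min _ w ha (conn_symm G hc)
    have hwa : w = ufRoot p (G.src e) := Sum.inl.inj (hinj (le_antisymm e1 e2))
    have hcw' : Conn G S (ufRoot p (G.src e)) w' := by
      rcases h2 with h2 | h2
      · exact (conn_symm G hca).trans h2
      · exact (conn_symm G hcb).trans h2
    rw [hwa]
    exact hI.root_min _ w' ha hcw'

lemma inv_step (hinj : Function.Injective pos) {S : E → Prop} {p : V → V}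
    (hI : Inv G pos S p) (e : E) :
    Inv G pos (fun e' => S e' ∨ e' = e) (G.ufStep pos p e) := by
  show Inv G pos _
    (if pos (.inl (ufRoot p (G.tgt e))) < pos (.inl (ufRoot p (G.src e))) then
      Function.update p (ufRoot p (G.src e)) (ufRoot p (G.tgt e))
    else if pos (.inl (ufRoot p (G.src e))) < pos (.inl (ufRoot p (G.tgt e))) then
      Function.update p (ufRoot p (G.tgt e)) (ufRoot p (G.src e))
    else p)
  split_ifs with h1 h2
  · exact inv_update G pos hinj hI (Or.inl ⟨rfl, rfl⟩) h1
  · exact inv_update G pos hinj hI (Or.inr ⟨rfl, rfl⟩) h2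
  · exact inv_eq G pos hinj hI
      (Sum.inl.inj (hinj (le_antisymm (not_lt.mp h1) (not_lt.mp h2))))

lemma step_nonroot {p : V → V} (hd : DecP pos p) (e : E) {v : V} (hv : p v ≠ v) :
    G.ufStep pos p e v = p v := by
  have ha := ufRoot_fixed pos hd (G.src e)
  have hb := ufRoot_fixed pos hd (G.tgt e)
  show (if pos (.inl (ufRoot p (G.tgt e))) < pos (.inl (ufRoot p (G.src e))) then
      Function.update p (ufRoot p (G.src e)) (ufRoot p (G.tgt e))
    else if pos (.inl (ufRoot p (G.src e))) < pos (.inl (ufRoot p (G.tgt e))) then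
      Function.update p (ufRoot p (G.tgt e)) (ufRoot p (G.src e))
    else p) v = p v
  split_ifs with h1 h2
  · exact Function.update_of_ne (fun h => hv (by rw [h]; exact ha)) _ _
  · exact Function.update_of_ne (fun h => hv (by rw [h]; exact hb)) _ _
  · rfl

lemma step_changed {p : V → V} (hd : DecP pos p) {e : E} {v : V}
    (h : G.ufStep pos p e v ≠ p v) :
    ∃ x y, G.Ends e x y ∧ v = ufRoot p x ∧
      G.ufStep pos p e v = ufRoot p y ∧
      pos (.inl (ufRoot p y)) < pos (.inl (ufRoot p x)) ∧
      G.ufStep pos p e (ufRoot p y) = ufRoot p y := by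
  have ha := ufRoot_fixed pos hd (G.src e)
  have hb := ufRoot_fixed pos hd (G.tgt e)
  have hstep : G.ufStep pos p e =
    (if pos (.inl (ufRoot p (G.tgt e))) < pos (.inl (ufRoot p (G.src e))) then
      Function.update p (ufRoot p (G.src e)) (ufRoot p (G.tgt e))
    else if pos (.inl (ufRoot p (G.src e))) < pos (.inl (ufRoot p (G.tgt e))) then
      Function.update p (ufRoot p (G.tgt e)) (ufRoot p (G.src e))
    else p) := rfl
  rw [hstep] at h ⊢
  split_ifs at h ⊢ with h1 h2
  · have hv : v = ufRoot p (G.src e) := by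
      by_contra hne
      rw [Function.update_of_ne hne] at h
      exact h rfl
    have hne : ufRoot p (G.tgt e) ≠ ufRoot p (G.src e) := by
      intro hh; rw [hh] at h1; exact lt_irrefl _ h1
    refine ⟨G.src e, G.tgt e, Or.inl ⟨rfl, rfl⟩, hv, ?_, h1, ?_⟩
    · rw [hv, Function.update_self]
    · rw [Function.update_of_ne hne]; exact hb
  · have hv : v = ufRoot p (G.tgt e) := by
      by_contra hne
      rw [Function.update_of_ne hne] at h
      exact h rfl
    have hne : ufRoot p (G.src e) ≠ ufRoot p (G.tgt e) := by
      intro hh; rw [hh] at h2; exact lt_irrefl _ h2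
    refine ⟨G.tgt e, G.src e, Or.inr ⟨rfl, rfl⟩, hv, ?_, h2, ?_⟩
    · rw [hv, Function.update_self]
    · rw [Function.update_of_ne hne]; exact ha
  · exact absurd rfl h

lemma run_nonroot (hinj : Function.Injective pos) :
    ∀ (l : List E) {S : E → Prop} {p : V → V}, Inv G pos S p → ∀ {v : V}, p v ≠ v →
      (l.foldl (G.ufStep pos) p) v = p v := by
  intro l
  induction l with
  | nil => intros; rfl
  | cons e t ih =>
    intro S p hI v hv
    have h1 : G.ufStep pos p e v = p v := step_nonroot G pos hI.dec e hv
    have hI' := inv_step G pos hinj hI e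
    have hv' : G.ufStep pos p e v ≠ v := by rw [h1]; exact hv
    simp only [List.foldl_cons]
    rw [ih hI' hv', h1]

lemma foldl_inv (hinj : Function.Injective pos) :
    ∀ (l : List E) {S : E → Prop} {p : V → V}, Inv G pos S p →
      Inv G pos (fun e => S e ∨ e ∈ l) (l.foldl (G.ufStep pos) p) := by
  intro l
  induction l with
  | nil =>
    intro S p hI
    exact hI.of_iff G pos (fun e => by simp)
  | cons e t ih =>
    intro S p hI
    have h1 := inv_step G pos hinj hI e
    have h2 := ih h1
    refine Inv.of_iff G pos (fun e' => ?_) h2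
    simp only [List.mem_cons]
    tauto

lemma run_inv (hinj : Function.Injective pos) (l : List E) :
    Inv G pos (· ∈ l) (G.ufRun pos l) := by
  have hbase : Inv G pos (fun _ => False) (id : V → V) := by
    refine ⟨fun v => Or.inl rfl, fun v => .refl, ?_⟩
    intro v w _ hc
    induction hc with
    | refl => exact le_refl _
    | tail _ hstep ih =>
      obtain ⟨_, hF, _⟩ := hstep
      exact hF.elim
  have := foldl_inv G pos hinj l hbase
  exact this.of_iff G pos (fun e => by simp)

lemma first_change {v : V} : ∀ (l : List E) (p : V → V), p v = v →
    (l.foldl (G.ufStep pos) p) v ≠ v →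
    ∃ l₁ e l₂, l = l₁ ++ e :: l₂ ∧ (l₁.foldl (G.ufStep pos) p) v = v ∧
      (G.ufStep pos (l₁.foldl (G.ufStep pos) p) e) v ≠ v := by
  intro l
  induction l with
  | nil => intro p hp h; exact absurd hp h
  | cons e t ih =>
    intro p hp h
    by_cases he : G.ufStep pos p e v = v
    · obtain ⟨l₁, e', l₂, heq, h1, h2⟩ := ih (G.ufStep pos p e) he (by simpa using h)
      exact ⟨e :: l₁, e', l₂, by rw [heq]; rfl, by simpa using h1, by simpa using h2⟩
    · exact ⟨[], e, t, rfl, hp, by simp only [List.foldl_nil]; exact he⟩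

end UFProof

end UFProofAux

/-- The modified union-find algorithm, processing all edges in the order given by
a `G`-ordering, produces a rooted tree satisfying the Basin Hierarchy Tree
conditions. -/
theorem ufRun_isBHT {V E : Type*} [Fintype V] [Fintype E]
    (G : MGraph V E) (hG : G.Connected) (f : V → ℝ) (pos : V ⊕ E → ℕ)
    (hpos : G.IsGOrdering f pos) (r : V) (hr : ∀ v, pos (.inl r) ≤ pos (.inl v))
    (l : List E) (hnd : l.Nodup) (hall : ∀ e : E, e ∈ l)
    (hsorted : l.Pairwise fun a b => pos (.inr a) < pos (.inr b)) :
    (G.ufRun pos l) r = r ∧ (∀ v, ∃ n : ℕ, (G.ufRun pos l)^[n] v = r) ∧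
    ∀ v, v ≠ r → ∃ e : E,
      G.IsCompMin pos (pos (.inr e)) v v ∧
      G.IsCompMin pos (pos (.inr e) + 1) ((G.ufRun pos l) v) v := by
  classical
  obtain ⟨hinj, -, hord⟩ := hpos
  have hIf : UFProof.Inv G pos (· ∈ l) (G.ufRun pos l) := UFProof.run_inv G pos hinj l
  have h1 : (G.ufRun pos l) r = r := by
    rcases hIf.dec r with h | h
    · exact h
    · exact absurd (hr ((G.ufRun pos l) r)) (not_le.mpr h)
  have hroot : ∀ v : V, (G.ufRun pos l) v = v → v = r := by
    intro v hv
    have hc : UFProof.Conn G (· ∈ l) v r :=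
      Relation.ReflTransGen.mono (fun x y ⟨e, hxy⟩ => ⟨e, hall e, hxy⟩) _ _ (hG v r)
    exact Sum.inl.inj (hinj (le_antisymm (hIf.root_min v r hv hc) (hr v)))
  have h2 : ∀ v, ∃ n : ℕ, (G.ufRun pos l)^[n] v = r := by
    intro v
    exact ⟨Fintype.card V, hroot _ (UFProof.ufRoot_fixed pos hIf.dec v)⟩
  refine ⟨h1, h2, ?_⟩
  intro v hv
  have hnv : (G.ufRun pos l) v ≠ v := fun h => hv (hroot v h)
  obtain ⟨l₁, e, l₂, hl, hp1, hch⟩ := UFProof.first_change G pos l id rfl hnv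
  set p₁ := l₁.foldl (G.ufStep pos) id with hp₁def
  have hI1 : UFProof.Inv G pos (· ∈ l₁) p₁ := UFProof.run_inv G pos hinj l₁
  have hI2 : UFProof.Inv G pos (fun e' => e' ∈ l₁ ∨ e' = e) (G.ufStep pos p₁ e) :=
    UFProof.inv_step G pos hinj hI1 e
  have hval : (G.ufRun pos l) v = G.ufStep pos p₁ e v := by
    have hdec : G.ufRun pos l = l₂.foldl (G.ufStep pos) (G.ufStep pos p₁ e) := by
      show l.foldl (G.ufStep pos) id = _
      rw [hl, List.foldl_append, List.foldl_cons]
    rw [hdec]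
    exact UFProof.run_nonroot G pos hinj l₂ hI2 hch
  have hchanged : G.ufStep pos p₁ e v ≠ p₁ v := by rw [hp1]; exact hch
  obtain ⟨x, y, hxy, hvx, hstepval, hlt, hwfix⟩ :=
    UFProof.step_changed G pos hI1.dec hchanged
  set K := pos (.inr e) with hKdef
  rw [hl, List.pairwise_append] at hsorted
  have hmem1 : ∀ e', e' ∈ l₁ ↔ pos (.inr e') < K := by
    intro e'
    constructor
    · intro he'
      exact hsorted.2.2 e' he' e (List.mem_cons_self (a := e) (l := l₂))
    · intro hlt'
      have hmem : e' ∈ l₁ ++ e :: l₂ := hl ▸ hall e'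
      rcases List.mem_append.mp hmem with h | h
      · exact h
      · rcases List.mem_cons.mp h with rfl | h
        · exact absurd hlt' (lt_irrefl _)
        · have := (List.pairwise_cons.mp hsorted.2.1).1 e' h
          omega
  have hmem2 : ∀ e', (e' ∈ l₁ ∨ e' = e) ↔ pos (.inr e') < K + 1 := by
    intro e'
    constructor
    · rintro (h | rfl)
      · exact Nat.lt_succ_of_lt ((hmem1 e').1 h)
      · exact Nat.lt_succ_self _
    · intro h
      rcases Nat.lt_succ_iff_lt_or_eq.mp h with h | h
      · exact Or.inl ((hmem1 e').2 h)
      · exact Or.inr (Sum.inr.inj (hinj h))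
  have hxK : pos (.inl x) < K := by
    rcases hxy with ⟨hx, -⟩ | ⟨-, hx⟩
    · exact hx ▸ (hord e).1
    · exact hx ▸ (hord e).2
  have hconnxv : UFProof.Conn G (· ∈ l₁) x v := by
    rw [hvx]; exact UFProof.ufRoot_conn G hI1.conn x
  have hvK : pos (.inl v) < K :=
    UFProof.conn_endpoint_lt G pos hord (fun e' he' => (hmem1 e').1 he') hxK hconnxv
  refine ⟨e, ⟨⟨hvK, hvK, .refl⟩, ?_⟩, ?_, ?_⟩
  · intro w' hw'
    exact hI1.root_min v w' hp1
      (UFProof.connB_conn G pos (fun e' => (hmem1 e').symm) hw')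
  · -- ConnB (K+1) (pf v) v
    have hcy : UFProof.Conn G (· ∈ l₁) y (ufRoot p₁ y) := UFProof.ufRoot_conn G hI1.conn y
    have hconn_vw : UFProof.Conn G (fun e' => e' ∈ l₁ ∨ e' = e) v (ufRoot p₁ y) :=
      ((UFProof.conn_mono G (S' := fun e' => e' ∈ l₁ ∨ e' = e) (fun _ => Or.inl) (UFProof.conn_symm G hconnxv)).tail
        ⟨e, Or.inr rfl, hxy⟩).trans (UFProof.conn_mono G (fun _ => Or.inl) hcy)
    have hwltv : pos (.inl (ufRoot p₁ y)) < pos (.inl v) := by rw [hvx]; exact hlt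
    have hwK : pos (.inl (ufRoot p₁ y)) < K := hwltv.trans hvK
    rw [hval, hstepval]
    exact UFProof.conn_connB G pos (fun e' he' => (hmem2 e').1 he')
      (Nat.lt_succ_of_lt hwK) (Nat.lt_succ_of_lt hvK) (UFProof.conn_symm G hconn_vw)
  · intro w' hw'
    have hcvw' : UFProof.Conn G (fun e' => e' ∈ l₁ ∨ e' = e) v w' :=
      UFProof.connB_conn G pos (fun e' => (hmem2 e').symm) hw'
    have hcy : UFProof.Conn G (· ∈ l₁) y (ufRoot p₁ y) := UFProof.ufRoot_conn G hI1.conn y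
    have hconnxv' := hconnxv
    have hconn_vw : UFProof.Conn G (fun e' => e' ∈ l₁ ∨ e' = e) v (ufRoot p₁ y) :=
      ((UFProof.conn_mono G (S' := fun e' => e' ∈ l₁ ∨ e' = e) (fun _ => Or.inl) (UFProof.conn_symm G hconnxv)).tail
        ⟨e, Or.inr rfl, hxy⟩).trans (UFProof.conn_mono G (fun _ => Or.inl) hcy)
    have hcww' : UFProof.Conn G (fun e' => e' ∈ l₁ ∨ e' = e) (ufRoot p₁ y) w' :=
      (UFProof.conn_symm G hconn_vw).trans hcvw'
    rw [hval, hstepval]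
    exact hI2.root_min _ w' hwfix hcww'
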